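/- Let Z_1, Z_2 be independent standard Lévy(1/2) random variables, let x ∈ (0,1) and b > 0, and set ψ̄ = (b² - 1)/(b² + 1). Then P((1-x)·b²·Z_1 < (1+x)·Z_2) = (1/π)·arccos((ψ̄ - x)/(1 - ψ̄ x)); that is, this probability equals φ(x,b). -/

import Mathlib

open MeasureTheory ProbabilityTheory Filter
open Set Real intervalIntegral Topology

noncomputable section

/-- The law of a standard Lévy(1/2) random variable: density
`(2π)^{-1/2} z^{-3/2} exp(-1/(2z))` on `(0,∞)`, `0` elsewhere. -/
def levyHalf : Measure ℝ :=
  volume.withDensity fun z =>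
    ENNReal.ofReal (if 0 < z then
      (2 * Real.pi) ^ (-(1 : ℝ) / 2) * z ^ (-(3 : ℝ) / 2) * Real.exp (-1 / (2 * z))
    else 0)

namespace LevyAux

lemma gauss_integrable : Integrable (fun u : ℝ => Real.exp (-u^2/2)) := by
  have := integrable_exp_neg_mul_sq (b := (1:ℝ)/2) (by norm_num)
  convert this using 2 with u
  ring_nf

lemma gauss_cont : Continuous (fun u : ℝ => Real.exp (-u^2/2)) := by
  continuity

/-- primitive of the gaussian kernel -/
def primG (y : ℝ) : ℝ := ∫ v in (0:ℝ)..y, Real.exp (-v^2/2)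

lemma primG_hasDerivAt (y : ℝ) : HasDerivAt primG (Real.exp (-y^2/2)) y :=
  intervalIntegral.integral_hasDerivAt_right
    (gauss_cont.intervalIntegrable _ _)
    (gauss_cont.stronglyMeasurableAtFilter _ _)
    gauss_cont.continuousAt

lemma primG_continuous : Continuous primG :=
  intervalIntegral.continuous_primitive (fun a b => gauss_cont.intervalIntegrable a b) 0

lemma primG_abs_le (y : ℝ) : |primG y| ≤ ∫ v : ℝ, Real.exp (-v^2/2) := by
  have h1 : ‖primG y‖ ≤ ∫ v in Set.uIoc 0 y, ‖Real.exp (-v^2/2)‖ :=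
    intervalIntegral.norm_integral_le_integral_norm_uIoc
  simp only [Real.norm_eq_abs, abs_of_nonneg (Real.exp_nonneg _)] at h1
  refine h1.trans ?_
  exact setIntegral_le_integral gauss_integrable
    (Filter.Eventually.of_forall fun v => Real.exp_nonneg _)

lemma primG_nonneg {y : ℝ} (hy : 0 ≤ y) : 0 ≤ primG y :=
  intervalIntegral.integral_nonneg hy (fun v _ => (Real.exp_pos _).le)

/-- `∫_{0}^{∞} u e^{-c u²/2} du = 1/c` -/
lemma intA {c : ℝ} (hc : 0 < c) :
    ∫ u in Ioi (0:ℝ), u * Real.exp (-(c * u^2)/2) = 1/c := by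
  have hderiv : ∀ u ∈ Ici (0:ℝ),
      HasDerivAt (fun u : ℝ => -(1/c) * Real.exp (-(c * u^2)/2))
        (u * Real.exp (-(c * u^2)/2)) u := by
    intro u _
    have h1 : HasDerivAt (fun u : ℝ => -(c * u^2)/2) (-(c*u)) u := by
      have := (((hasDerivAt_pow 2 u).const_mul c).neg).div_const 2
      exact this.congr_deriv (by rw [show (2:ℕ)-1 = 1 from rfl]; push_cast; ring)
    have := (h1.exp).const_mul (-(1/c))
    exact this.congr_deriv (by
      rw [show -(1/c) * (Real.exp (-(c * u^2)/2) * -(c*u)) = (c/c) * (u * Real.exp (-(c * u^2)/2)) by ring,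
        div_self hc.ne', one_mul])
  have hint : IntegrableOn (fun u : ℝ => u * Real.exp (-(c * u^2)/2)) (Ioi 0) := by
    have := integrable_mul_exp_neg_mul_sq (b := c/2) (by linarith)
    have h2 : (fun x : ℝ => x * Real.exp (-(c/2) * x ^ 2))
        = fun u : ℝ => u * Real.exp (-(c * u^2)/2) := by
      funext u; ring_nf
    exact (h2 ▸ this).integrableOn
  have htend : Tendsto (fun u : ℝ => -(1/c) * Real.exp (-(c * u^2)/2)) atTop (𝓝 0) := by
    have h0 : Tendsto (fun u : ℝ => c * u^2) atTop atTop :=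
      (tendsto_pow_atTop two_ne_zero).const_mul_atTop hc
    have h1 : Tendsto (fun u : ℝ => -(c * u^2)/2) atTop atBot :=
      (tendsto_neg_atBot_iff.mpr h0).atBot_div_const (by norm_num)
    have h2 : Tendsto (fun u : ℝ => Real.exp (-(c * u^2)/2)) atTop (𝓝 0) :=
      Real.tendsto_exp_atBot.comp h1
    simpa using h2.const_mul (-(1/c))
  have := integral_Ioi_of_hasDerivAt_of_tendsto' hderiv hint htend
  simp at this
  rw [this]
  field_simp

/-- the sector integral -/
def G (m : ℝ) : ℝ := ∫ u in Ioi (0:ℝ), Real.exp (-u^2/2) * primG (m * u)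

lemma G_hasDerivAt (m : ℝ) : HasDerivAt G (1/(1+m^2)) m := by
  have key := _root_.hasDerivAt_integral_of_dominated_loc_of_deriv_le
    (μ := volume.restrict (Ioi (0:ℝ)))
    (F := fun m u => Real.exp (-u^2/2) * primG (m * u))
    (F' := fun m u => Real.exp (-u^2/2) * (Real.exp (-(m*u)^2/2) * u))
    (x₀ := m) (s := Metric.ball m 1) (bound := fun u => u * Real.exp (-u^2/2))
    (Metric.ball_mem_nhds m one_pos) ?meas ?int ?meas' ?bound ?bint ?diff
  case meas =>
    filter_upwards with m'
    exact (gauss_cont.mul (primG_continuous.comp (continuous_const.mul continuous_id))).aestronglyMeasurable.restrict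
  case int =>
    apply Integrable.mono' (g := fun u => (∫ v : ℝ, Real.exp (-v^2/2)) * Real.exp (-u^2/2))
    · exact (gauss_integrable.const_mul _).restrict
    · exact (gauss_cont.mul (primG_continuous.comp (continuous_const.mul continuous_id))).aestronglyMeasurable.restrict
    · filter_upwards with u
      rw [norm_mul, Real.norm_eq_abs, Real.norm_eq_abs, abs_of_nonneg (Real.exp_nonneg _)]
      rw [mul_comm ((∫ v : ℝ, Real.exp (-v^2/2)))]
      exact mul_le_mul_of_nonneg_left (primG_abs_le _) (Real.exp_nonneg _)
  case meas' =>
    apply Continuous.aestronglyMeasurable ?_ |>.restrict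
    continuity
  case bound =>
    rw [ae_restrict_iff' measurableSet_Ioi]
    filter_upwards with u hu
    intro m' _
    rw [norm_mul, Real.norm_eq_abs, Real.norm_eq_abs, abs_of_nonneg (Real.exp_nonneg _),
      abs_of_nonneg (mul_nonneg (Real.exp_nonneg _) (le_of_lt hu))]
    rw [mul_comm (u : ℝ) (Real.exp (-u^2/2))]
    apply mul_le_mul_of_nonneg_left _ (Real.exp_nonneg _)
    calc Real.exp (-(m'*u)^2/2) * u ≤ 1 * u := by
          apply mul_le_mul_of_nonneg_right _ (le_of_lt hu)
          rw [← Real.exp_zero]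
          apply Real.exp_le_exp.mpr
          simp only [neg_div]
          simp only [Left.neg_nonpos_iff]
          positivity
      _ = u := one_mul u
  case bint =>
    have := integrable_mul_exp_neg_mul_sq (b := (1:ℝ)/2) (by norm_num)
    have h2 : (fun x : ℝ => x * Real.exp (-((1:ℝ)/2) * x ^ 2)) = fun u : ℝ => u * Real.exp (-u^2/2) := by
      funext u; ring_nf
    exact ((h2 ▸ this)).restrict
  case diff =>
    filter_upwards with u
    intro m' _
    have h1 : HasDerivAt (fun m' : ℝ => m' * u) u m' := by
      simpa using (hasDerivAt_id m').mul_const u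
    have := (primG_hasDerivAt (m' * u)).comp m' h1
    exact (this.const_mul _)
  -- now identify the derivative integral
  have hval : (∫ u in Ioi (0:ℝ), Real.exp (-u^2/2) * (Real.exp (-(m*u)^2/2) * u)) = 1/(1+m^2) := by
    rw [← intA (c := 1 + m^2) (by positivity)]
    apply setIntegral_congr_fun measurableSet_Ioi
    intro u _
    simp only
    have h3 : Real.exp (-u^2/2) * (Real.exp (-(m*u)^2/2) * u)
        = u * (Real.exp (-u^2/2) * Real.exp (-(m*u)^2/2)) := by ring
    rw [h3, ← Real.exp_add]
    congr 1
    ring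
  rw [← hval]
  exact key.2

lemma G_zero : G 0 = 0 := by
  have : ∀ u : ℝ, Real.exp (-u^2/2) * primG (0 * u) = 0 := by
    intro u; simp [primG]
  simp only [G, this, integral_zero]

lemma G_eq (m : ℝ) : G m = Real.arctan m := by
  have hd : ∀ z : ℝ, HasDerivAt (fun y => G y - Real.arctan y) 0 z := by
    intro z
    have h1 := (G_hasDerivAt z).sub (Real.hasDerivAt_arctan z)
    have h2 : 1/(1+z^2) - 1/(1+z^2) = 0 := sub_self _
    rw [h2] at h1; exact h1
  have hconst := is_const_of_deriv_eq_zero (f := fun y => G y - Real.arctan y)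
    (fun z => (hd z).differentiableAt) (fun z => (hd z).deriv) m 0
  simp only [Real.arctan_zero, sub_zero, G_zero, zero_sub] at hconst
  linarith [hconst]

/-- the normalizing constant -/
def Cl : ℝ := (2 * Real.pi) ^ (-(1:ℝ)/2)

lemma Cl_pos : 0 < Cl := Real.rpow_pos_of_pos (by positivity) _

/-- the Lévy(1/2) density (without the positivity cutoff) -/
def fl (z : ℝ) : ℝ := Cl * z ^ (-(3:ℝ)/2) * Real.exp (-1/(2*z))

/-- the substitution map -/
def phi (v : ℝ) : ℝ := (v^2)⁻¹

lemma phi_hasDerivWithinAt {v : ℝ} (hv : v ≠ 0) (s : Set ℝ) :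
    HasDerivWithinAt phi (-((2:ℝ) * v ^ 1)/((v^2)^2)) s v := by
  have h := (hasDerivAt_pow 2 v).inv (pow_ne_zero 2 hv)
  have h2 : ((2:ℕ):ℝ) * v ^ (2-1) = (2:ℝ) * v ^ 1 := by norm_num
  rw [h2] at h
  exact h.hasDerivWithinAt

lemma phi_injOn {s : Set ℝ} (hsub : s ⊆ Ioi 0) : InjOn phi s := by
  intro p hp q hq hpq
  have hp' : 0 < p := hsub hp
  have hq' : 0 < q := hsub hq
  have h1 : p^2 = q^2 := by
    have := congrArg (fun w : ℝ => w⁻¹) hpq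
    simpa [phi, inv_inv] using this
  nlinarith

lemma phi_image_Ioo {r : ℝ} (hr : 0 < r) : phi '' (Ioo 0 r) = Ioi ((r^2)⁻¹) := by
  ext z
  constructor
  · rintro ⟨v, ⟨hv0, hvr⟩, rfl⟩
    have h2 : v^2 < r^2 := by nlinarith
    exact mem_Ioi.mpr (inv_strictAnti₀ (pow_pos hv0 2) h2)
  · intro hz
    have hz' : (r^2)⁻¹ < z := hz
    have hz0 : 0 < z := lt_trans (by positivity) hz'
    have hsz : 0 < Real.sqrt z := Real.sqrt_pos.mpr hz0
    refine ⟨(Real.sqrt z)⁻¹, ⟨inv_pos.mpr hsz, ?_⟩, ?_⟩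
    · have h1 : r⁻¹ < Real.sqrt z := by
        have h3 := Real.sqrt_lt_sqrt (by positivity) hz'
        rwa [show ((r^2)⁻¹ : ℝ) = (r⁻¹)^2 by rw [inv_pow], Real.sqrt_sq (inv_nonneg.mpr hr.le)] at h3
      calc (Real.sqrt z)⁻¹ < (r⁻¹)⁻¹ := inv_strictAnti₀ (inv_pos.mpr hr) h1
        _ = r := inv_inv r
    · simp only [phi]
      rw [← Real.sqrt_inv, Real.sq_sqrt (inv_nonneg.mpr hz0.le), inv_inv]

lemma phi_image_Ioi : phi '' (Ioi 0) = Ioi 0 := by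
  ext z
  constructor
  · rintro ⟨v, hv, rfl⟩
    have hv' : (0:ℝ) < v := hv
    exact mem_Ioi.mpr (by simp only [phi]; positivity)
  · intro hz
    have hz' : (0:ℝ) < z := hz
    have hsz : 0 < Real.sqrt z := Real.sqrt_pos.mpr hz'
    exact ⟨(Real.sqrt z)⁻¹, inv_pos.mpr hsz, by
      simp only [phi]
      rw [← Real.sqrt_inv, Real.sq_sqrt (inv_nonneg.mpr hz'.le), inv_inv]⟩

lemma fl_phi {v : ℝ} (hv : 0 < v) :
    |(-((2:ℝ) * v ^ 1)/((v^2)^2))| * fl (phi v) = 2 * Cl * Real.exp (-v^2/2) := by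
  have hv' : v ≠ 0 := ne_of_gt hv
  have h1 : ((v^2)⁻¹ : ℝ) ^ (-(3:ℝ)/2) = v ^ 3 := by
    rw [← Real.rpow_neg_one (v^2)]
    rw [← Real.rpow_natCast v 2]
    rw [← Real.rpow_mul hv.le, ← Real.rpow_mul hv.le]
    norm_num
  have h2 : (-1)/(2*((v^2)⁻¹ : ℝ)) = -v^2/2 := by field_simp
  simp only [phi, fl, h1, h2]
  have h3 : -((2:ℝ) * v ^ 1)/((v^2)^2) ≤ 0 :=
    div_nonpos_of_nonpos_of_nonneg (by nlinarith) (by positivity)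
  rw [abs_of_nonpos h3]
  have h4 : -(-((2:ℝ) * v ^ 1)/((v^2)^2)) = 2/v^3 := by
    field_simp
  rw [h4]
  field_simp

lemma subst_gen {s : Set ℝ} (hs : MeasurableSet s) (hsub : s ⊆ Ioi 0) (g : ℝ → ℝ) :
    (∫ z in phi '' s, g z) = ∫ v in s, |(-((2:ℝ) * v ^ 1)/((v^2)^2))| • g (phi v) :=
  integral_image_eq_integral_abs_deriv_smul hs
    (fun v hv => phi_hasDerivWithinAt (ne_of_gt (hsub hv)) s) (phi_injOn hsub) g

lemma subst_gen_int {s : Set ℝ} (hs : MeasurableSet s) (hsub : s ⊆ Ioi 0) (g : ℝ → ℝ) :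
    IntegrableOn g (phi '' s) ↔ IntegrableOn (fun v => |(-((2:ℝ) * v ^ 1)/((v^2)^2))| • g (phi v)) s :=
  integrableOn_image_iff_integrableOn_abs_deriv_smul hs
    (fun v hv => phi_hasDerivWithinAt (ne_of_gt (hsub hv)) s) (phi_injOn hsub) g

lemma levy_tail (t : ℝ) (ht : 0 < t) :
    IntegrableOn fl (Ioi t) ∧ ∫ z in Ioi t, fl z = 2 * Cl * primG ((Real.sqrt t)⁻¹) := by
  set r : ℝ := (Real.sqrt t)⁻¹ with hr_def
  have hr : 0 < r := by positivity
  have himg : phi '' (Ioo 0 r) = Ioi t := by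
    rw [phi_image_Ioo hr]
    congr 1
    rw [hr_def, inv_pow, inv_inv, Real.sq_sqrt ht.le]
  have heq : EqOn (fun v => |(-((2:ℝ) * v ^ 1)/((v^2)^2))| • fl (phi v))
      (fun v => 2 * Cl * Real.exp (-v^2/2)) (Ioo 0 r) := by
    intro v hv
    simp only [smul_eq_mul]
    exact fl_phi hv.1
  constructor
  · rw [← himg, subst_gen_int measurableSet_Ioo (fun v hv => hv.1) fl]
    apply IntegrableOn.congr_fun _ heq.symm measurableSet_Ioo
    exact ((gauss_integrable.const_mul _)).integrableOn
  · rw [← himg, subst_gen measurableSet_Ioo (fun v hv => hv.1) fl,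
      setIntegral_congr_fun measurableSet_Ioo heq]
    rw [MeasureTheory.integral_const_mul, ← integral_Ioc_eq_integral_Ioo,
      ← intervalIntegral.integral_of_le hr.le]
    rfl

lemma levy_integrableOn_Ioi : IntegrableOn fl (Ioi (0:ℝ)) := by
  rw [← phi_image_Ioi, subst_gen_int measurableSet_Ioi (fun v hv => hv) fl]
  apply IntegrableOn.congr_fun (((gauss_integrable.const_mul (2 * Cl))).integrableOn)
    ?_ measurableSet_Ioi
  intro v hv
  simp only [smul_eq_mul]
  exact (fl_phi hv).symm

lemma arccos_ratio {m : ℝ} (hm : 0 ≤ m) :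
    Real.arccos ((1 - m^2)/(1 + m^2)) = 2 * Real.arctan m := by
  have h1 : Real.cos (2 * Real.arctan m) = (1 - m^2)/(1 + m^2) := by
    rw [Real.cos_two_mul, Real.cos_arctan]
    rw [div_pow, one_pow, Real.sq_sqrt (by positivity)]
    field_simp
    ring
  have h2 : 0 ≤ 2 * Real.arctan m := by
    have h0 : Real.arctan 0 ≤ Real.arctan m := Real.arctan_strictMono.monotone hm
    rw [Real.arctan_zero] at h0
    linarith
  have h3 : 2 * Real.arctan m ≤ Real.pi := by
    have := Real.arctan_lt_pi_div_two m
    linarith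
  rw [← h1, Real.arccos_cos h2 h3]




lemma levyHalf_eq : levyHalf
    = volume.withDensity (fun z => ENNReal.ofReal (if 0 < z then fl z else 0)) := rfl

lemma fl_nonneg {z : ℝ} (hz : 0 < z) : 0 ≤ fl z :=
  le_of_lt (mul_pos (mul_pos Cl_pos (Real.rpow_pos_of_pos hz _)) (Real.exp_pos _))

lemma rho_meas : Measurable (fun z => ENNReal.ofReal (if 0 < z then fl z else 0)) := by
  have h : (fun z => if 0 < z then fl z else 0)
      = (Ioi (0:ℝ)).indicator
          (fun z => Cl * Real.exp (Real.log z * (-(3:ℝ)/2)) * Real.exp (-1/(2*z))) := by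
    funext z
    by_cases hz : 0 < z
    · rw [indicator_of_mem (mem_Ioi.mpr hz), if_pos hz]
      simp only [fl]
      rw [Real.rpow_def_of_pos hz]
    · rw [indicator_of_notMem (by simpa using hz), if_neg hz]
  apply Measurable.ennreal_ofReal
  rw [h]
  apply Measurable.indicator _ measurableSet_Ioi
  exact ((measurable_const.mul ((Real.measurable_log.mul measurable_const).exp)).mul
    ((measurable_const.div (measurable_const.mul measurable_id)).exp))

lemma four_Cl_sq : 2 * Cl * (2 * Cl) = 2 / Real.pi := by
  have h1 : Cl * Cl = (2 * Real.pi)⁻¹ := by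
    rw [Cl, ← Real.rpow_add (by positivity),
      show (-(1:ℝ)/2 + -(1:ℝ)/2) = (-1 : ℝ) by norm_num, Real.rpow_neg_one]
  rw [show 2 * Cl * (2 * Cl) = 4 * (Cl * Cl) by ring, h1]
  have hpi := Real.pi_pos
  rw [eq_div_iff (ne_of_gt hpi)]
  field_simp
  ring


lemma G_integrand_integrable (m : ℝ) :
    Integrable (fun u : ℝ => Real.exp (-u^2/2) * primG (m*u)) := by
  apply Integrable.mono' (g := fun u => (∫ v : ℝ, Real.exp (-v^2/2)) * Real.exp (-u^2/2))
  · exact gauss_integrable.const_mul _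
  · exact (gauss_cont.mul (primG_continuous.comp
      (continuous_const.mul continuous_id))).aestronglyMeasurable
  · filter_upwards with u
    rw [norm_mul, Real.norm_eq_abs, Real.norm_eq_abs, abs_of_nonneg (Real.exp_nonneg _),
      mul_comm ((∫ v : ℝ, Real.exp (-v^2/2)))]
    exact mul_le_mul_of_nonneg_left (primG_abs_le _) (Real.exp_nonneg _)

end LevyAux

/-- If `Z₁, Z₂` are independent standard Lévy(1/2) random variables,
`x ∈ (0,1)`, `b > 0` and `ψ̄ = (b²-1)/(b²+1)`, then
`P((1-x)·b²·Z₁ < (1+x)·Z₂) = (1/π)·arccos((ψ̄-x)/(1-ψ̄x)) = φ(x,b)`. -/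
theorem levy_half_phi_prob
    {Ω : Type*} [MeasurableSpace Ω] (μ : Measure Ω) [IsProbabilityMeasure μ]
    (Z₁ Z₂ : Ω → ℝ) (h₁ : Measurable Z₁) (h₂ : Measurable Z₂)
    (hl₁ : μ.map Z₁ = levyHalf) (hl₂ : μ.map Z₂ = levyHalf)
    (hind : IndepFun Z₁ Z₂ μ) (x b : ℝ) (hx : x ∈ Set.Ioo (0 : ℝ) 1) (hb : 0 < b) :
    (μ {ω | (1 - x) * b ^ 2 * Z₁ ω < (1 + x) * Z₂ ω}).toReal
      = (1 / Real.pi) * Real.arccos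
          (((b ^ 2 - 1) / (b ^ 2 + 1) - x) / (1 - (b ^ 2 - 1) / (b ^ 2 + 1) * x)) := by
  obtain ⟨hx0, hx1⟩ := hx
  have hb2 : (0:ℝ) < b ^ 2 := by positivity
  set a : ℝ := (1 - x) * b ^ 2 with ha_def
  set d : ℝ := 1 + x with hd_def
  have ha : 0 < a := mul_pos (by linarith) hb2
  have hd : 0 < d := by linarith
  set m : ℝ := Real.sqrt (d / a) with hm_def
  have hm : 0 < m := Real.sqrt_pos.mpr (div_pos hd ha)
  haveI hprob : IsProbabilityMeasure levyHalf := by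
    rw [← hl₁]; exact Measure.isProbabilityMeasure_map h₁.aemeasurable
  -- Step 1: probability via the product measure
  have hE : MeasurableSet {p : ℝ × ℝ | a * p.1 < d * p.2} :=
    measurableSet_lt (measurable_fst.const_mul a) (measurable_snd.const_mul d)
  have hmap : μ.map (fun ω => (Z₁ ω, Z₂ ω)) = levyHalf.prod levyHalf := by
    have h := (ProbabilityTheory.indepFun_iff_map_prod_eq_prod_map_map
      h₁.aemeasurable h₂.aemeasurable).mp hind
    rwa [hl₁, hl₂] at h
  have step1 : μ {ω | a * Z₁ ω < d * Z₂ ω}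
      = (levyHalf.prod levyHalf) {p : ℝ × ℝ | a * p.1 < d * p.2} := by
    rw [show {ω | a * Z₁ ω < d * Z₂ ω}
        = (fun ω => (Z₁ ω, Z₂ ω)) ⁻¹' {p : ℝ × ℝ | a * p.1 < d * p.2} from rfl,
      ← Measure.map_apply (h₁.prodMk h₂) hE, hmap]
  -- Step 2: Fubini
  have step2 : (levyHalf.prod levyHalf) {p : ℝ × ℝ | a * p.1 < d * p.2}
      = ∫⁻ z₁, levyHalf (Ioi (a * z₁ / d)) ∂levyHalf := by
    rw [Measure.prod_apply hE]
    apply lintegral_congr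
    intro z₁
    congr 1
    ext z₂
    simp only [mem_preimage, mem_setOf_eq, mem_Ioi, div_lt_iff₀ hd]
    constructor <;> intro h <;> linarith
  -- measurability of the inner tail function
  have hg_meas : Measurable (fun z₁ : ℝ => levyHalf (Ioi (a * z₁ / d))) := by
    apply Antitone.measurable
    intro z₁ z₂ hz
    apply measure_mono
    apply Ioi_subset_Ioi
    gcongr
  -- Step 3: unfold the outer density
  have step3 : (∫⁻ z₁, levyHalf (Ioi (a * z₁ / d)) ∂levyHalf)
      = ∫⁻ z₁ in Ioi 0, ENNReal.ofReal (LevyAux.fl z₁) * levyHalf (Ioi (a * z₁ / d)) := by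
    have hmeq : (∫⁻ z₁, levyHalf (Ioi (a * z₁ / d)) ∂levyHalf)
        = ∫⁻ z₁, levyHalf (Ioi (a * z₁ / d))
            ∂(volume.withDensity fun z => ENNReal.ofReal (if 0 < z then LevyAux.fl z else 0)) := by
      rw [← LevyAux.levyHalf_eq]
    rw [hmeq, lintegral_withDensity_eq_lintegral_mul _ LevyAux.rho_meas hg_meas,
      ← lintegral_indicator measurableSet_Ioi]
    apply lintegral_congr
    have h : (fun z₁ => (ENNReal.ofReal (if 0 < z₁ then LevyAux.fl z₁ else 0)
          * levyHalf (Ioi (a * z₁ / d))))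
        = (Ioi (0:ℝ)).indicator
            (fun z₁ => ENNReal.ofReal (LevyAux.fl z₁) * levyHalf (Ioi (a * z₁ / d))) := by
      funext z₁
      by_cases hz : 0 < z₁
      · rw [indicator_of_mem (mem_Ioi.mpr hz), if_pos hz]
      · rw [indicator_of_notMem (by simpa using hz), if_neg hz, ENNReal.ofReal_zero, zero_mul]
    intro z₁
    simp only [Pi.mul_apply]
    exact congrFun h z₁
  -- Step 4: the inner tail as a real quantity
  set W : ℝ → ℝ := fun z₁ => 2 * LevyAux.Cl * LevyAux.primG ((Real.sqrt (a * z₁ / d))⁻¹)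
    with hW_def
  have hgW : ∀ z₁ ∈ Ioi (0:ℝ), levyHalf (Ioi (a * z₁ / d)) = ENNReal.ofReal (W z₁) := by
    intro z₁ hz₁
    have hz₁' : (0:ℝ) < z₁ := hz₁
    have ht : 0 < a * z₁ / d := div_pos (mul_pos ha hz₁') hd
    have h1 : (∫⁻ z in Ioi (a*z₁/d), ENNReal.ofReal (if 0 < z then LevyAux.fl z else 0))
        = ∫⁻ z in Ioi (a*z₁/d), ENNReal.ofReal (LevyAux.fl z) :=
      setLIntegral_congr_fun measurableSet_Ioi (fun z hz => by
        rw [if_pos (lt_trans ht hz)])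
    have h2 := LevyAux.levy_tail (a*z₁/d) ht
    rw [LevyAux.levyHalf_eq, withDensity_apply _ measurableSet_Ioi, h1,
      ← ofReal_integral_eq_lintegral_ofReal h2.1
        ((ae_restrict_iff' measurableSet_Ioi).mpr (ae_of_all _ fun z hz =>
          LevyAux.fl_nonneg (lt_trans ht hz))),
      h2.2]
  -- Step 5: merge the two ofReal factors
  have step5 : (∫⁻ z₁ in Ioi 0, ENNReal.ofReal (LevyAux.fl z₁) * levyHalf (Ioi (a * z₁ / d)))
      = ∫⁻ z₁ in Ioi 0, ENNReal.ofReal (LevyAux.fl z₁ * W z₁) :=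
    setLIntegral_congr_fun measurableSet_Ioi (fun z₁ hz₁ => by
      rw [hgW z₁ hz₁, ← ENNReal.ofReal_mul (LevyAux.fl_nonneg hz₁)])
  -- the composed inner function after the substitution
  have hWcomp : ∀ u : ℝ, 0 < u →
      W (LevyAux.phi u) = 2 * LevyAux.Cl * LevyAux.primG (m * u) := by
    intro u hu
    have h1 : a * (u^2)⁻¹ / d = (a/d) / u^2 := by ring
    have h2 : Real.sqrt ((a/d)/u^2) = Real.sqrt (a/d) / u := by
      rw [Real.sqrt_div (div_pos ha hd).le, Real.sqrt_sq hu.le]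
    have h3 : (Real.sqrt (a/d) / u)⁻¹ = m * u := by
      rw [inv_div, hm_def, div_eq_mul_inv, ← Real.sqrt_inv, inv_div]
      ring
    rw [hW_def]
    simp only [LevyAux.phi]
    rw [h1, h2, h3]
  have heqOn : EqOn
      (fun u : ℝ => |(-((2:ℝ) * u ^ 1)/((u^2)^2))| • (LevyAux.fl (LevyAux.phi u) * W (LevyAux.phi u)))
      (fun u : ℝ => (2*LevyAux.Cl*(2*LevyAux.Cl)) * (Real.exp (-u^2/2) * LevyAux.primG (m*u)))
      (Ioi (0:ℝ)) := by
    intro u hu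
    have hu' : (0:ℝ) < u := hu
    simp only [smul_eq_mul]
    rw [← mul_assoc, LevyAux.fl_phi hu', hWcomp u hu']
    ring
  -- Step 6: integrability of the real integrand
  have hintW : IntegrableOn (fun z => LevyAux.fl z * W z) (Ioi (0:ℝ)) := by
    rw [← LevyAux.phi_image_Ioi,
      LevyAux.subst_gen_int measurableSet_Ioi (fun v hv => hv) _]
    apply IntegrableOn.congr_fun ?_ heqOn.symm measurableSet_Ioi
    exact (((LevyAux.G_integrand_integrable m).const_mul _)).integrableOn
  -- Step 7: evaluate the integral
  have hval : (∫ z in Ioi (0:ℝ), LevyAux.fl z * W z) = (2/Real.pi) * Real.arctan m := by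
    rw [← LevyAux.phi_image_Ioi,
      LevyAux.subst_gen measurableSet_Ioi (fun v hv => hv) _,
      setIntegral_congr_fun measurableSet_Ioi heqOn,
      MeasureTheory.integral_const_mul, LevyAux.four_Cl_sq,
      show (∫ u in Ioi (0:ℝ), Real.exp (-u^2/2) * LevyAux.primG (m*u)) = LevyAux.G m from rfl,
      LevyAux.G_eq]
  have harctan : 0 ≤ Real.arctan m := by
    have h0 : Real.arctan 0 ≤ Real.arctan m := Real.arctan_strictMono.monotone hm.le
    rwa [Real.arctan_zero] at h0
  have step7 : (∫⁻ z₁ in Ioi 0, ENNReal.ofReal (LevyAux.fl z₁ * W z₁))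
      = ENNReal.ofReal ((2/Real.pi) * Real.arctan m) := by
    rw [← ofReal_integral_eq_lintegral_ofReal hintW
      ((ae_restrict_iff' measurableSet_Ioi).mpr (ae_of_all _ fun z hz =>
        mul_nonneg (LevyAux.fl_nonneg hz)
          (mul_nonneg (mul_nonneg (by norm_num) LevyAux.Cl_pos.le)
            (LevyAux.primG_nonneg (inv_nonneg.mpr (Real.sqrt_nonneg _)))))), hval]
  -- put everything together
  rw [step1, step2, step3, step5, step7,
    ENNReal.toReal_ofReal (mul_nonneg (by positivity) harctan)]
  -- final algebra
  have hm2 : m^2 = d/a := by rw [hm_def]; exact Real.sq_sqrt (div_pos hd ha).le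
  have h1 : (0:ℝ) < b^2+1 := by positivity
  have h2 : (0:ℝ) < (1-x)*b^2 + (1+x) := by nlinarith
  have hu : ((b^2-1)/(b^2+1) - x)/(1 - (b^2-1)/(b^2+1)*x) = (1 - m^2)/(1 + m^2) := by
    have key : ∀ (N D c : ℝ), c ≠ 0 → (N/c)/(D/c) = N/D := by
      intro N D c hc
      rw [div_div_div_comm, div_self hc, div_one]
    have hax : ((1:ℝ)-x)*b^2 ≠ 0 := by positivity
    rw [hm2, ha_def, hd_def]
    have hL1 : ((b^2-1)/(b^2+1) - x) = ((1-x)*b^2 - (1+x))/(b^2+1) := by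
      field_simp; ring
    have hL2 : (1 - (b^2-1)/(b^2+1)*x) = ((1-x)*b^2 + (1+x))/(b^2+1) := by
      field_simp; ring
    have hR1 : (1 - (1+x)/((1-x)*b^2)) = ((1-x)*b^2 - (1+x))/((1-x)*b^2) := by
      field_simp
    have hR2 : (1 + (1+x)/((1-x)*b^2)) = ((1-x)*b^2 + (1+x))/((1-x)*b^2) := by
      field_simp
    rw [hL1, hL2, hR1, hR2, key _ _ _ h1.ne', key _ _ _ hax]
  rw [hu, LevyAux.arccos_ratio hm.le]
  ring
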